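/- Let n ≥ 1 and let W₁, W₂ : ℝⁿ → ℝ be C² functions that are uniformly strongly convex, i.e. there exists σ > 0 such that ⟨∇²Wᵢ(x)v, v⟩ ≥ σ|v|² for all x, v ∈ ℝⁿ and i = 1, 2. Assume that for every ξ ∈ ℝⁿ there exist x, y ∈ ℝⁿ with ξ = ∇W₁(x) = ∇W₂(y) and ∇²W₁(x) = ∇²W₂(y). Then there exist η ∈ ℝⁿ and b ∈ ℝ such that W₁(x) = W₂(x+η) + b for all x ∈ ℝⁿ. (Lemma 5.2.) -/

import Mathlib

open InnerProductSpace

lemma grad_contDiff {n : ℕ} {W : EuclideanSpace ℝ (Fin n) → ℝ} (h : ContDiff ℝ 2 W) :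
    ContDiff ℝ 1 (gradient W) := by
  have h1 : ContDiff ℝ 1 (fderiv ℝ W) := h.fderiv_right (m := 1) (by norm_num)
  exact (toDual ℝ (EuclideanSpace ℝ (Fin n))).symm.contDiff.comp h1

lemma mono_of_fderiv {n : ℕ} {f : EuclideanSpace ℝ (Fin n) → EuclideanSpace ℝ (Fin n)}
    (hf : Differentiable ℝ f) {σ : ℝ}
    (h : ∀ x v, σ * ‖v‖ ^ 2 ≤ (inner ℝ (fderiv ℝ f x v) v : ℝ)) (x y : EuclideanSpace ℝ (Fin n)) :
    σ * ‖x - y‖ ^ 2 ≤ (inner ℝ (f x - f y) (x - y) : ℝ) := by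
  set v := x - y with hv
  set g : ℝ → ℝ := fun t => (innerSL ℝ v) (f (y + t • v)) - σ * ‖v‖ ^ 2 * t with hg
  have hderiv : ∀ t : ℝ, HasDerivAt g
      ((innerSL ℝ v) (fderiv ℝ f (y + t • v) v) - σ * ‖v‖ ^ 2) t := by
    intro t
    have hc : HasDerivAt (fun t : ℝ => y + t • v) v t := by
      simpa using ((hasDerivAt_id t).smul_const v).const_add y
    have hfc : HasDerivAt (fun t : ℝ => f (y + t • v)) (fderiv ℝ f (y + t • v) v) t :=
      (hf.differentiableAt.hasFDerivAt.comp_hasDerivAt t hc)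
    have h2 := (innerSL ℝ v).hasFDerivAt.comp_hasDerivAt t hfc
    have h3 := ((hasDerivAt_id t).const_mul (σ * ‖v‖ ^ 2)).sub_const 0
    exact (h2.sub (by simpa using (hasDerivAt_id t).const_mul (σ * ‖v‖ ^ 2)))
  have hmono : Monotone g := by
    apply monotone_of_deriv_nonneg
    · exact fun t => (hderiv t).differentiableAt
    · intro t
      rw [(hderiv t).deriv]
      have := h (y + t • v) v
      have hcomm : (innerSL ℝ v) (fderiv ℝ f (y + t • v) v)
          = (inner ℝ (fderiv ℝ f (y + t • v) v) v : ℝ) := by rw [innerSL_apply_apply]; exact real_inner_comm _ _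
      rw [hcomm]; linarith
  have h01 : g 0 ≤ g 1 := hmono zero_le_one
  simp only [hg, zero_smul, add_zero, one_smul, mul_one, mul_zero, sub_zero] at h01
  have hyx : y + v = x := by rw [hv]; abel
  rw [hyx] at h01
  have e1 : (innerSL ℝ v) (f x) = (inner ℝ (f x) v : ℝ) := by rw [innerSL_apply_apply]; exact real_inner_comm _ _
  have e2 : (innerSL ℝ v) (f y) = (inner ℝ (f y) v : ℝ) := by rw [innerSL_apply_apply]; exact real_inner_comm _ _
  rw [e1, e2] at h01
  have := inner_sub_left (𝕜 := ℝ) (f x) (f y) v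
  rw [this]
  linarith

open InnerProductSpace

lemma hess_equiv {n : ℕ} (A : EuclideanSpace ℝ (Fin n) →L[ℝ] EuclideanSpace ℝ (Fin n))
    {σ : ℝ} (hσ : 0 < σ) (h : ∀ v, σ * ‖v‖ ^ 2 ≤ (inner ℝ (A v) v : ℝ)) :
    ∃ e : EuclideanSpace ℝ (Fin n) ≃L[ℝ] EuclideanSpace ℝ (Fin n), (e : _ →L[ℝ] _) = A := by
  have hinj : Function.Injective A := by
    intro u w huw
    have h2 := h (u - w)
    rw [map_sub, huw, sub_self] at h2
    simp only [inner_zero_left] at h2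
    have : ‖u - w‖ ^ 2 ≤ 0 := by
      by_contra hc
      push_neg at hc
      nlinarith
    have : u - w = 0 := by
      have := sq_nonneg ‖u - w‖
      have h0 : ‖u - w‖ ^ 2 = 0 := le_antisymm ‹_› ‹_›
      simpa [pow_eq_zero_iff] using h0
    exact sub_eq_zero.mp this
  have hbij : Function.Bijective A.toLinearMap :=
    ⟨hinj, (LinearMap.injective_iff_surjective).mp hinj⟩
  refine ⟨(LinearEquiv.ofBijective A.toLinearMap hbij).toContinuousLinearEquiv, ?_⟩
  ext v
  rfl

lemma inj_of_conv {n : ℕ} {f : EuclideanSpace ℝ (Fin n) → EuclideanSpace ℝ (Fin n)}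
    (hf : Differentiable ℝ f) {σ : ℝ} (hσ : 0 < σ)
    (h : ∀ x v, σ * ‖v‖ ^ 2 ≤ (inner ℝ (fderiv ℝ f x v) v : ℝ)) :
    Function.Injective f := by
  intro a b hab
  have hm := mono_of_fderiv hf h a b
  rw [hab, sub_self] at hm
  simp only [inner_zero_left] at hm
  have h2 : ‖a - b‖ ^ 2 ≤ 0 := by nlinarith [sq_nonneg ‖a - b‖]
  have h0 : ‖a - b‖ ^ 2 = 0 := le_antisymm h2 (sq_nonneg _)
  have : a - b = 0 := by simpa [pow_eq_zero_iff] using h0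
  exact sub_eq_zero.mp this

/-- **Lemma 5.2**: two uniformly strongly convex `C²` functions whose gradient maps
are onto and whose Hessians agree at points with the same gradient coincide up to
a translation and an additive constant. -/
theorem strongly_convex_hessian_rigidity
    (n : ℕ) (hn : 1 ≤ n)
    (W₁ W₂ : EuclideanSpace ℝ (Fin n) → ℝ)
    (hW₁ : ContDiff ℝ 2 W₁) (hW₂ : ContDiff ℝ 2 W₂)
    (σ : ℝ) (hσ : 0 < σ)
    (hconv₁ : ∀ x v : EuclideanSpace ℝ (Fin n),
      σ * ‖v‖ ^ 2 ≤ (inner ℝ (fderiv ℝ (gradient W₁) x v) v : ℝ))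
    (hconv₂ : ∀ x v : EuclideanSpace ℝ (Fin n),
      σ * ‖v‖ ^ 2 ≤ (inner ℝ (fderiv ℝ (gradient W₂) x v) v : ℝ))
    (hsurj : ∀ ξ : EuclideanSpace ℝ (Fin n), ∃ x y : EuclideanSpace ℝ (Fin n),
      gradient W₁ x = ξ ∧ gradient W₂ y = ξ ∧
      fderiv ℝ (gradient W₁) x = fderiv ℝ (gradient W₂) y) :
    ∃ (η : EuclideanSpace ℝ (Fin n)) (b : ℝ), ∀ x, W₁ x = W₂ (x + η) + b := by
  have hG₁ : ContDiff ℝ 1 (gradient W₁) := grad_contDiff hW₁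
  have hG₂ : ContDiff ℝ 1 (gradient W₂) := grad_contDiff hW₂
  have hd₁ : Differentiable ℝ (gradient W₁) := hG₁.differentiable one_ne_zero
  have hd₂ : Differentiable ℝ (gradient W₂) := hG₂.differentiable one_ne_zero
  have inj₁ : Function.Injective (gradient W₁) := inj_of_conv hd₁ hσ hconv₁
  have inj₂ : Function.Injective (gradient W₂) := inj_of_conv hd₂ hσ hconv₂
  choose X T hX hT hH using fun x => hsurj (gradient W₁ x)
  have hHx : ∀ x, fderiv ℝ (gradient W₁) x = fderiv ℝ (gradient W₂) (T x) := by
    intro x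
    have hXx : X x = x := inj₁ (hX x)
    have := hH x
    rwa [hXx] at this
  -- T has derivative id everywhere
  have hTderiv : ∀ x, HasFDerivAt T (ContinuousLinearMap.id ℝ (EuclideanSpace ℝ (Fin n))) x := by
    intro x
    obtain ⟨A, hA⟩ := hess_equiv (fderiv ℝ (gradient W₂) (T x)) hσ (hconv₂ (T x))
    have hstrict : HasStrictFDerivAt (gradient W₂)
        (A : EuclideanSpace ℝ (Fin n) →L[ℝ] EuclideanSpace ℝ (Fin n)) (T x) := by
      rw [hA]; exact (hG₂.contDiffAt).hasStrictFDerivAt one_ne_zero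
    set g := hstrict.localInverse (gradient W₂) A (T x) with hgdef
    have hinv : ∀ᶠ ξ in nhds (gradient W₂ (T x)), gradient W₂ (g ξ) = ξ :=
      hstrict.eventually_right_inverse
    rw [hT x] at hinv
    have hcont : Filter.Tendsto (gradient W₁) (nhds x) (nhds (gradient W₁ x)) :=
      (hd₁.continuous.continuousAt)
    have hev : ∀ᶠ x' in nhds x, gradient W₂ (g (gradient W₁ x')) = gradient W₁ x' :=
      hcont.eventually hinv
    have hTeq : T =ᶠ[nhds x] fun x' => g (gradient W₁ x') :=
      hev.mono fun x' h => (inj₂ (h.trans (hT x').symm)).symm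
    have hg' : HasFDerivAt g
        (A.symm : EuclideanSpace ℝ (Fin n) →L[ℝ] EuclideanSpace ℝ (Fin n))
        (gradient W₁ x) := by
      have := hstrict.to_localInverse.hasFDerivAt
      rw [hT x] at this; exact this
    have hcomp : HasFDerivAt (fun x' => g (gradient W₁ x'))
        ((A.symm : EuclideanSpace ℝ (Fin n) →L[ℝ] EuclideanSpace ℝ (Fin n)).comp
          (fderiv ℝ (gradient W₁) x)) x :=
      hg'.comp x (hd₁ x).hasFDerivAt
    have hid : (A.symm : EuclideanSpace ℝ (Fin n) →L[ℝ] EuclideanSpace ℝ (Fin n)).comp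
        (fderiv ℝ (gradient W₁) x) = ContinuousLinearMap.id ℝ _ := by
      ext v
      have : fderiv ℝ (gradient W₁) x v = A v := by rw [hHx x, ← hA]; rfl
      simp [ContinuousLinearMap.comp_apply, this]
    rw [hid] at hcomp
    exact hcomp.congr_of_eventuallyEq hTeq
  -- T - id is constant
  have hsub : ∀ x, HasFDerivAt (fun x => T x - x)
      (0 : EuclideanSpace ℝ (Fin n) →L[ℝ] EuclideanSpace ℝ (Fin n)) x := by
    intro x
    have := (hTderiv x).sub (hasFDerivAt_id x)
    exact this.congr_fderiv (by simp)
  have hconst : ∀ x y, T x - x = T y - y :=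
    is_const_of_fderiv_eq_zero (fun x => (hsub x).differentiableAt)
      (fun x => (hsub x).fderiv)
  set η := T 0 - 0 with hη
  have hTx : ∀ x, T x = x + η := by
    intro x
    have := hconst x 0
    rw [← hη] at this
    rw [← this]; abel
  have hgrad : ∀ x, gradient W₂ (x + η) = gradient W₁ x := by
    intro x; rw [← hTx x]; exact hT x
  have hfd : ∀ x, fderiv ℝ W₂ (x + η) = fderiv ℝ W₁ x := by
    intro x
    have h1 := congrArg (InnerProductSpace.toDual ℝ (EuclideanSpace ℝ (Fin n))) (hgrad x)
    simpa [gradient] using h1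
  have hdiff : ∀ x, HasFDerivAt (fun x => W₁ x - W₂ (x + η))
      (0 : EuclideanSpace ℝ (Fin n) →L[ℝ] ℝ) x := by
    intro x
    have h1 : HasFDerivAt W₁ (fderiv ℝ W₁ x) x :=
      ((hW₁.differentiable (by norm_num)) x).hasFDerivAt
    have h2 : HasFDerivAt (fun x => W₂ (x + η)) (fderiv ℝ W₂ (x + η)) x := by
      have := ((hW₂.differentiable (by norm_num)) (x + η)).hasFDerivAt.comp x
        ((hasFDerivAt_id x).add_const η)
      exact this.congr_fderiv (by simp)
    have := h1.sub h2
    rw [hfd x] at this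
    exact this.congr_fderiv (by simp)
  have hc := is_const_of_fderiv_eq_zero (𝕜 := ℝ) (f := fun x => W₁ x - W₂ (x + η))
    (fun x => (hdiff x).differentiableAt) (fun x => (hdiff x).fderiv)
  refine ⟨η, W₁ 0 - W₂ (0 + η), fun x => ?_⟩
  have := hc x 0
  linarith
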